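/- Let b ≥ 1 and v ∈ {0,1}*. Then the palindromic length of ψ_b(v) is at most the palindromic length of v plus 1, i.e., |ψ_b(v)|_pal ≤ |v|_pal + 1. -/

import Mathlib

/-- The morphism ψ_b on letters: ψ_b(0) = 1·0^{b-1}, ψ_b(1) = 1·0^b
    (letters: `false` = 0, `true` = 1). -/
def psiL (b : ℕ) : Bool → List Bool
  | false => true :: List.replicate (b - 1) false
  | true  => true :: List.replicate b false

/-- The morphism ψ_b extended to words. -/
def psiW (b : ℕ) (v : List Bool) : List Bool := v.flatMap (psiL b)

/-- A palindrome is a word equal to its reversal. -/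
def IsPal {A : Type*} (w : List A) : Prop := w.reverse = w

/-- Palindromic length: minimal number of palindromes concatenating to `w`. -/
noncomputable def palLen {A : Type*} (w : List A) : ℕ :=
  sInf {k | ∃ l : List (List A), l.length = k ∧ (∀ p ∈ l, IsPal p) ∧ l.flatten = w}

/-- `v` is a factor of the infinite word `u`. -/
def FactorOf {A : Type*} (v : List A) (u : ℕ → A) : Prop :=
  ∃ i, v = (List.range v.length).map (fun k => u (i + k))

/-- A Sturmian word: exactly `n+1` factors of each length `n`. -/
def Sturmian (u : ℕ → Bool) : Prop :=
  ∀ n, Set.ncard {v : List Bool | v.length = n ∧ FactorOf v u} = n + 1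

/-- `u` has slope `α`: the frequency of the letter 1 (= `true`) is `α`. -/
def HasSlope (u : ℕ → Bool) (α : ℝ) : Prop :=
  Filter.Tendsto (fun n => (((List.range n).map u).count true : ℝ) / n)
    Filter.atTop (nhds α)

/-- The image of an infinite word under ψ_b. -/
noncomputable def psiInf (b : ℕ) (u : ℕ → Bool) : ℕ → Bool :=
  fun k => (((List.range (k + 1)).map u).flatMap (psiL b)).getD k false

/-- PL_u(n): maximal palindromic length of factors of length `n` of `u`. -/
noncomputable def PL (u : ℕ → Bool) (n : ℕ) : ℕ :=
  sSup {k | ∃ v : List Bool, v.length = n ∧ FactorOf v u ∧ palLen v = k}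

lemma psiL_eq (b : ℕ) (a : Bool) : ∃ c, psiL b a = true :: List.replicate c false := by
  cases a
  · exact ⟨b - 1, rfl⟩
  · exact ⟨b, rfl⟩

lemma psiW_append (b : ℕ) (x y : List Bool) :
    psiW b (x ++ y) = psiW b x ++ psiW b y := by
  simp [psiW]

lemma psiW_cons (b : ℕ) (a : Bool) (w : List Bool) :
    psiW b (a :: w) = psiL b a ++ psiW b w := by
  simp [psiW]

lemma key (b : ℕ) : ∀ w : List Bool,
    true :: (psiW b w).reverse = psiW b w.reverse ++ [true] := by
  intro w
  induction w with
  | nil => simp [psiW]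
  | cons a w' ih =>
    obtain ⟨c, hc⟩ := psiL_eq b a
    rw [psiW_cons, List.reverse_cons, psiW_append]
    have : psiW b [a] = psiL b a := by simp [psiW]
    rw [this, List.reverse_append]
    calc true :: ((psiW b w').reverse ++ (psiL b a).reverse)
        = (true :: (psiW b w').reverse) ++ (psiL b a).reverse := rfl
      _ = (psiW b w'.reverse ++ [true]) ++ (psiL b a).reverse := by rw [ih]
      _ = psiW b w'.reverse ++ psiL b a ++ [true] := by
          rw [hc]; simp
  
lemma psi_pal (b : ℕ) (p : List Bool) (hp : IsPal p) (hne : p ≠ []) :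
    ∃ t, psiW b p = true :: t ∧ t.reverse = t := by
  obtain ⟨a, p', rfl⟩ := List.exists_cons_of_ne_nil hne
  obtain ⟨c, hc⟩ := psiL_eq b a
  refine ⟨List.replicate c false ++ psiW b p', by rw [psiW_cons, hc]; simp, ?_⟩
  set t := List.replicate c false ++ psiW b p' with ht
  have hpsi : psiW b (a :: p') = true :: t := by rw [psiW_cons, hc]; simp [ht]
  have h := key b (a :: p')
  rw [hp] at h
  rw [hpsi] at h
  simp only [List.reverse_cons] at h
  have h' : true :: (t.reverse ++ [true]) = true :: (t ++ [true]) := by simpa using h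
  exact List.append_cancel_right (List.cons_injective h')

lemma main_ind (b : ℕ) : ∀ l : List (List Bool), (∀ p ∈ l, IsPal p) →
    ∃ l' : List (List Bool), (∀ p ∈ l', IsPal p) ∧ l'.flatten = psiW b l.flatten ∧
      (l'.length ≤ l.length ∨
        (l'.length ≤ l.length + 1 ∧ l'.head? = some [true])) := by
  intro l
  induction l with
  | nil =>
    intro _
    exact ⟨[], by simp, by simp [psiW], Or.inl (by simp)⟩
  | cons p l ih =>
    intro hpal
    obtain ⟨l', hl'pal, hl'flat, hl'len⟩ := ih (fun q hq => hpal q (List.mem_cons_of_mem _ hq))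
    by_cases hne : p = []
    · subst hne
      refine ⟨l', hl'pal, by simpa using hl'flat, Or.inl ?_⟩
      rcases hl'len with h | ⟨h, _⟩
      · exact h.trans (Nat.le_succ _)
      · simpa using h
    · obtain ⟨t, hpsit, htpal⟩ := psi_pal b p (hpal p List.mem_cons_self) hne
      have hflat : psiW b ((p :: l).flatten) = (true :: t) ++ psiW b l.flatten := by
        rw [List.flatten_cons, psiW_append, hpsit]
      rcases hl'len with h | ⟨h, hhead⟩
      · -- left case: new list [true] :: t :: l'
        refine ⟨[true] :: t :: l', ?_, ?_, Or.inr ⟨?_, rfl⟩⟩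
        · intro q hq
          simp only [List.mem_cons] at hq
          rcases hq with rfl | rfl | hq
          · rfl
          · exact htpal
          · exact hl'pal q hq
        · simp [psiW_append, hpsit, hl'flat]
        · simpa using Nat.add_le_add_right h 2
      · -- right case: l' = [true] :: l''
        cases l' with
        | nil => simp at hhead
        | cons q l'' =>
          simp only [List.head?_cons, Option.some.injEq] at hhead
          subst hhead
          refine ⟨((true :: t) ++ [true]) :: l'', ?_, ?_, Or.inl ?_⟩
          · intro q hq
            simp only [List.mem_cons] at hq
            rcases hq with rfl | hq
            · show ((true :: t) ++ [true]).reverse = _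
              simp [htpal]
            · exact hl'pal q (List.mem_cons_of_mem _ hq)
          · rw [List.flatten_cons, hflat]
            have hψ : psiW b l.flatten = true :: l''.flatten := by
              rw [← hl'flat]; simp
            rw [hψ]
            simp
          · simpa using h

theorem stmt4 (b : ℕ) (hb : 1 ≤ b) (v : List Bool) :
    palLen (psiW b v) ≤ palLen v + 1 := by
  have hne : {k | ∃ l : List (List Bool), l.length = k ∧ (∀ p ∈ l, IsPal p) ∧ l.flatten = v}.Nonempty := by
    refine ⟨v.length, v.map (fun a => [a]), by simp, ?_, ?_⟩
    · intro p hp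
      simp only [List.mem_map] at hp
      obtain ⟨a, _, rfl⟩ := hp
      rfl
    · induction v with
      | nil => simp
      | cons a v ih => simp [ih]
  have hmem := Nat.sInf_mem hne
  obtain ⟨l, hlen, hpal, hflat⟩ := hmem
  obtain ⟨l', hl'pal, hl'flat, hl'len⟩ := main_ind b l hpal
  have hbound : l'.length ≤ palLen v + 1 := by
    rw [palLen, ← hlen]
    rcases hl'len with h | ⟨h, _⟩
    · exact h.trans (Nat.le_succ _)
    · exact h
  calc palLen (psiW b v) ≤ l'.length :=
        Nat.sInf_le ⟨l', rfl, hl'pal, by rw [hl'flat, hflat]⟩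
    _ ≤ palLen v + 1 := hbound
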